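/- Suppose f : R → ℤ/pℤ has the representation f = Σ_{j=0}^{p^k−1} c_j·φ_j with coefficients c_j ∈ ℤ/pℤ. Then for every ℓ with 0 ≤ ℓ ≤ p^k−1, c_ℓ = (D^ℓ f)(0), where D^ℓ is the ℓ-fold iterate of D. -/
import Mathlib


/-- The binomial phi function `φ_m : ℤ/p^kℤ → ℤ/pℤ`, `φ_m(x) = C(x̄, m) mod p`. -/
def phi (p k m : ℕ) (x : ZMod (p ^ k)) : ZMod p := (x.val.choose m : ZMod p)

lemma Dphi (p k : ℕ) [Fact p.Prime] (hk : 1 ≤ k) (m : ℕ) (hm : m + 1 < p ^ k)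
    (x : ZMod (p ^ k)) : phi p k (m + 1) (x + 1) - phi p k (m + 1) x = phi p k m x := by
  have hp1 : 1 < p := (Fact.out : p.Prime).one_lt
  have hpk : 1 < p ^ k := one_lt_pow₀ hp1 (by omega)
  haveI : NeZero (p ^ k) := ⟨by omega⟩
  have hx : x.val < p ^ k := ZMod.val_lt x
  haveI : Fact (1 < p ^ k) := ⟨hpk⟩
  have hval : (x + 1).val = (x.val + 1) % p ^ k := by
    rw [ZMod.val_add, ZMod.val_one]
  by_cases h : x.val + 1 = p ^ k
  · have h0 : (x + 1).val = 0 := by rw [hval, h, Nat.mod_self]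
    have hpas : x.val.choose m + x.val.choose (m + 1) = (p ^ k).choose (m + 1) := by
      conv_rhs => rw [← h]
      exact (Nat.choose_succ_succ' x.val m).symm
    have hdvd : (p : ℕ) ∣ (p ^ k).choose (m + 1) := by
      exact Nat.Prime.dvd_choose_pow Fact.out (by omega) (by omega)
    have hz : ((p ^ k).choose (m + 1) : ZMod p) = 0 :=
      (ZMod.natCast_eq_zero_iff _ _).mpr hdvd
    have : ((x.val.choose m : ZMod p)) + (x.val.choose (m + 1) : ZMod p) = 0 := by
      rw [← Nat.cast_add, hpas, hz]
    simp only [phi, h0, Nat.choose_succ_succ, Nat.choose_zero_succ]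
    push_cast
    linear_combination -this
  · have h1 : (x + 1).val = x.val + 1 := by
      rw [hval, Nat.mod_eq_of_lt (by omega)]
    simp only [phi, h1, Nat.choose_succ_succ']
    push_cast
    ring

lemma iter_sum (p k : ℕ) [Fact p.Prime] (hk : 1 ≤ k) (c : ℕ → ZMod p)
    (f : ZMod (p ^ k) → ZMod p)
    (hf : f = fun x => ∑ j ∈ Finset.range (p ^ k), c j * phi p k j x) (l : ℕ) :
    ((fun g : ZMod (p ^ k) → ZMod p => fun x => g (x + 1) - g x)^[l] f) =
      fun x => ∑ j ∈ Finset.range (p ^ k - l), c (j + l) * phi p k j x := by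
  induction l with
  | zero => simpa using hf
  | succ l ih =>
    rw [Function.iterate_succ_apply', ih]
    funext x
    simp only
    rw [← Finset.sum_sub_distrib]
    simp only [← mul_sub]
    by_cases hl : p ^ k - l = 0
    · have : p ^ k - (l + 1) = 0 := by omega
      simp [hl, this]
    · have hsplit : p ^ k - l = (p ^ k - (l + 1)) + 1 := by omega
      rw [hsplit, Finset.sum_range_succ']
      have h0 : phi p k 0 (x + 1) - phi p k 0 x = 0 := by
        simp [phi]
      rw [h0, mul_zero, add_zero]
      apply Finset.sum_congr rfl
      intro j hj
      simp only [Finset.mem_range] at hj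
      have hjm : j + 1 < p ^ k := by omega
      rw [Dphi p k hk j hjm x]
      ring_nf

/-- If `f = Σ_{j=0}^{p^k−1} c_j·φ_j`, then for every `ℓ < p^k` we have
`c_ℓ = (D^ℓ f)(0)`, where `Df(x) = f(x+1) − f(x)`. -/
theorem stmt_14 (p k : ℕ) [Fact p.Prime] (hk : 1 ≤ k) (c : ℕ → ZMod p)
    (f : ZMod (p ^ k) → ZMod p)
    (hf : f = fun x => ∑ j ∈ Finset.range (p ^ k), c j * phi p k j x) :
    ∀ l < p ^ k,
      c l = ((fun g : ZMod (p ^ k) → ZMod p => fun x => g (x + 1) - g x)^[l] f) 0 := by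
  intro l hl
  haveI : NeZero (p ^ k) := ⟨pow_ne_zero k (Fact.out : p.Prime).pos.ne'⟩
  rw [iter_sum p k hk c f hf l]
  simp only
  rw [Finset.sum_eq_single 0]
  · simp [phi, ZMod.val_zero]
  · intro j _ hj
    have h0 : (0 : ℕ).choose j = 0 := Nat.choose_eq_zero_of_lt (by omega)
    simp [phi, ZMod.val_zero, h0]
  · intro h
    exfalso
    apply h
    simp only [Finset.mem_range]
    omega
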